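/- Let (G,I,O,λ) be a labelled open graph with gflow (g,≺). Form Γ' by adding a new vertex u' adjacent only to an output u ∈ O, setting O' = (O∖{u}) ∪ {u'}, and extending λ by λ'(u) = XY. Then Γ' = (G',I,O',λ') has a gflow: extend g by g'(u) = {u'} and extend ≺ by u ≺ u'. -/

import Mathlib

open Set

/-- The three measurement planes. -/
inductive MPlane | XY | XZ | YZ
deriving DecidableEq

/-- The odd neighbourhood of a set `K`: vertices with an odd number of neighbours in `K`. -/
def oddNbhd {V : Type*} (G : SimpleGraph V) (K : Set V) : Set V :=
  {u | Odd (K ∩ G.neighborSet u).ncard}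

/-- `(g, prec)` is a gflow for the labelled open graph `(G, I, O, lam)`. -/
structure GFlow {V : Type*} (G : SimpleGraph V) (I O : Set V) (lam : V → MPlane)
    (g : V → Set V) (prec : V → V → Prop) : Prop where
  irrefl : ∀ v, ¬ prec v v
  trans : ∀ u v w, prec u v → prec v w → prec u w
  noInput : ∀ v, v ∉ O → g v ∩ I = ∅
  g1 : ∀ v, v ∉ O → ∀ w ∈ g v, w ≠ v → prec v w
  g2 : ∀ v, v ∉ O → ∀ w ∈ oddNbhd G (g v), w ≠ v → prec v w
  gXY : ∀ v, v ∉ O → lam v = MPlane.XY → v ∉ g v ∧ v ∈ oddNbhd G (g v)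
  gXZ : ∀ v, v ∉ O → lam v = MPlane.XZ → v ∈ g v ∧ v ∈ oddNbhd G (g v)
  gYZ : ∀ v, v ∉ O → lam v = MPlane.YZ → v ∈ g v ∧ v ∉ oddNbhd G (g v)

/-- The graph obtained from `G` by adding a fresh vertex (`none`) adjacent only to `u`. -/
def addVertex {V : Type*} (G : SimpleGraph V) (u : V) : SimpleGraph (Option V) where
  Adj x y := (∃ a b, x = some a ∧ y = some b ∧ G.Adj a b) ∨
    (x = some u ∧ y = none) ∨ (x = none ∧ y = some u)
  symm := by
    constructor
    rintro x y (⟨a, b, rfl, rfl, hab⟩ | ⟨rfl, rfl⟩ | ⟨rfl, rfl⟩)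
    · exact Or.inl ⟨b, a, rfl, rfl, hab.symm⟩
    · exact Or.inr (Or.inr ⟨rfl, rfl⟩)
    · exact Or.inr (Or.inl ⟨rfl, rfl⟩)
  loopless := by
    constructor
    rintro x (⟨a, b, rfl, hb, hab⟩ | ⟨rfl, h⟩ | ⟨rfl, h⟩)
    · cases hb; exact G.loopless.irrefl a hab
    · cases h
    · cases h

lemma addVertex_adj_some_some {V : Type*} (G : SimpleGraph V) (u a b : V) :
    (addVertex G u).Adj (some a) (some b) ↔ G.Adj a b := by
  constructor
  · rintro (⟨a', b', ha, hb, hab⟩ | ⟨_, hb⟩ | ⟨ha, _⟩)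
    · obtain rfl := Option.some_injective _ ha
      obtain rfl := Option.some_injective _ hb
      exact hab
    · exact nomatch hb
    · exact nomatch ha
  · exact fun hab => Or.inl ⟨a, b, rfl, rfl, hab⟩

lemma addVertex_adj_some_none {V : Type*} (G : SimpleGraph V) (u a : V) :
    (addVertex G u).Adj (some a) none ↔ a = u := by
  constructor
  · rintro (⟨a', b', _, hb, _⟩ | ⟨ha, _⟩ | ⟨ha, _⟩)
    · exact nomatch hb
    · exact Option.some_injective _ ha
    · exact nomatch ha
  · rintro rfl; exact Or.inr (Or.inl ⟨rfl, rfl⟩)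

lemma addVertex_adj_none {V : Type*} (G : SimpleGraph V) (u : V) (x : Option V) :
    (addVertex G u).Adj none x ↔ x = some u := by
  constructor
  · rintro (⟨a', b', ha, _, _⟩ | ⟨ha, _⟩ | ⟨_, hx⟩)
    · exact nomatch ha
    · exact nomatch ha
    · exact hx
  · rintro rfl; exact Or.inr (Or.inr ⟨rfl, rfl⟩)

lemma nbhd_some_inter {V : Type*} (G : SimpleGraph V) (u : V) (K : Set V) (b : V) :
    some '' K ∩ (addVertex G u).neighborSet (some b) = some '' (K ∩ G.neighborSet b) := by
  ext x
  cases x with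
  | none => simp
  | some c =>
    simp [SimpleGraph.mem_neighborSet, addVertex_adj_some_some]

lemma mem_odd_some {V : Type*} [Fintype V] (G : SimpleGraph V) (u : V) (K : Set V) (b : V) :
    some b ∈ oddNbhd (addVertex G u) (some '' K) ↔ b ∈ oddNbhd G K := by
  unfold oddNbhd
  simp only [Set.mem_setOf_eq, nbhd_some_inter,
    Set.ncard_image_of_injective _ (Option.some_injective V)]

lemma mem_odd_none {V : Type*} [Fintype V] (G : SimpleGraph V) (u : V) (K : Set V) :
    none ∈ oddNbhd (addVertex G u) (some '' K) ↔ u ∈ K := by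
  have hns : (addVertex G u).neighborSet none = {some u} := by
    ext x; simp [SimpleGraph.mem_neighborSet, addVertex_adj_none]
  unfold oddNbhd
  rw [Set.mem_setOf_eq, hns]
  by_cases hK : u ∈ K
  · have he : some '' K ∩ {some u} = {some u} :=
      Set.inter_eq_right.mpr (Set.singleton_subset_iff.mpr ⟨u, hK, rfl⟩)
    rw [he]
    simp [hK]
  · have he : some '' K ∩ {some u} = ∅ := by
      apply Set.eq_empty_iff_forall_notMem.mpr
      rintro x ⟨⟨c, hc, rfl⟩, hx⟩
      obtain rfl := Option.some_injective _ hx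
      exact hK hc
    rw [he]
    simp [hK]

lemma mem_odd_singleton_none {V : Type*} [Fintype V] (G : SimpleGraph V) (u : V) (x : Option V) :
    x ∈ oddNbhd (addVertex G u) ({none} : Set (Option V)) ↔ x = some u := by
  unfold oddNbhd
  rw [Set.mem_setOf_eq]
  by_cases hx : x = some u
  · subst hx
    have he : ({none} : Set (Option V)) ∩ (addVertex G u).neighborSet (some u) = {none} := by
      apply Set.inter_eq_left.mpr
      rintro y rfl
      exact (addVertex_adj_some_none G u u).mpr rfl
    rw [he]
    simp
  · have he : ({none} : Set (Option V)) ∩ (addVertex G u).neighborSet x = ∅ := by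
      apply Set.eq_empty_iff_forall_notMem.mpr
      rintro y ⟨rfl, hy⟩
      cases x with
      | none => exact (addVertex G u).loopless.irrefl none hy
      | some a =>
        exact hx (by rw [(addVertex_adj_some_none G u a).mp hy])
    rw [he]
    simp [hx]

lemma tg_char {V : Type*} (u : V) (prec : V → V → Prop)
    (htr : ∀ a b c, prec a b → prec b c → prec a c) {x y : Option V}
    (hxy : Relation.TransGen (fun x y =>
      (∃ a b, x = some a ∧ y = some b ∧ prec a b) ∨ (x = some u ∧ y = none)) x y) :
    (∃ a b, x = some a ∧ y = some b ∧ prec a b) ∨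
      (∃ a, x = some a ∧ y = none ∧ (a = u ∨ prec a u)) := by
  induction hxy with
  | single hr =>
    rcases hr with ⟨a, b, rfl, rfl, hab⟩ | ⟨rfl, rfl⟩
    · exact Or.inl ⟨a, b, rfl, rfl, hab⟩
    · exact Or.inr ⟨u, rfl, rfl, Or.inl rfl⟩
  | tail _ hr ih =>
    rcases ih with ⟨a, b, rfl, rfl, hab⟩ | ⟨a, rfl, rfl, _⟩
    · rcases hr with ⟨b', c, hb, rfl, hbc⟩ | ⟨hb, rfl⟩
      · obtain rfl := Option.some_injective _ hb
        exact Or.inl ⟨a, c, rfl, rfl, htr _ _ _ hab hbc⟩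
      · obtain rfl := Option.some_injective _ hb
        exact Or.inr ⟨a, rfl, rfl, Or.inr hab⟩
    · rcases hr with ⟨b', c, hb, _, _⟩ | ⟨hb, _⟩ <;> exact nomatch hb

/-- Converting an output `u` into an XY-measured vertex and adding a new output
vertex `u'` (modelled as `none`) in its stead preserves gflow, via
`g'(u) = {u'}` and the transitive closure of `≺ ∪ {(u,u')}`. -/
theorem gflow_addOutput {V : Type*} [Fintype V] [DecidableEq V]
    (G : SimpleGraph V) (I O : Set V) (lam : V → MPlane)
    (g : V → Set V) (prec : V → V → Prop)
    (h : GFlow G I O lam g prec) (u : V) (hu : u ∈ O) :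
    GFlow (addVertex G u)
      (some '' I)
      ((some '' (O \ {u})) ∪ {none})
      (fun x => x.elim MPlane.XY (fun v => if v = u then MPlane.XY else lam v))
      (fun x => x.elim ∅ (fun v => if v = u then {none} else some '' g v))
      (Relation.TransGen (fun x y =>
        (∃ a b, x = some a ∧ y = some b ∧ prec a b) ∨ (x = some u ∧ y = none))) := by
  have hne : ∀ (x : Option V), x ∉ ((some '' (O \ {u})) ∪ {none} : Set (Option V)) →
      ∃ v, x = some v ∧ (v = u ∨ v ∉ O) := by
    intro x hx
    cases x with
    | none => exact absurd (Set.mem_union_right _ rfl) hx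
    | some v =>
      refine ⟨v, rfl, ?_⟩
      by_contra hc
      push_neg at hc
      exact hx (Set.mem_union_left _ ⟨v, ⟨hc.2, hc.1⟩, rfl⟩)
  refine
    { irrefl := ?_
      trans := fun _ _ _ h1 h2 => h1.trans h2
      noInput := ?_, g1 := ?_, g2 := ?_, gXY := ?_, gXZ := ?_, gYZ := ?_ }
  · -- irrefl
    intro x hx
    rcases tg_char u prec h.trans hx with ⟨a, b, ha, hb, hab⟩ | ⟨a, ha, hb, _⟩
    · rw [ha] at hb
      obtain rfl := Option.some_injective _ hb
      exact h.irrefl a hab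
    · rw [ha] at hb
      exact nomatch hb
  · -- noInput
    intro x hx
    obtain ⟨v, rfl, hv⟩ := hne x hx
    by_cases hvu : v = u
    · subst hvu
      simp only [Option.elim, if_pos rfl]
      apply Set.eq_empty_iff_forall_notMem.mpr
      rintro y ⟨rfl, hy⟩
      obtain ⟨c, _, hc⟩ := hy
      exact nomatch hc
    · have hvO : v ∉ O := hv.resolve_left hvu
      simp only [Option.elim, if_neg hvu]
      rw [← Set.image_inter (Option.some_injective V), h.noInput v hvO, Set.image_empty]
  · -- g1
    intro x hx w hw hwne
    obtain ⟨v, rfl, hv⟩ := hne x hx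
    by_cases hvu : v = u
    · subst hvu
      simp only [Option.elim, if_pos rfl, Set.mem_singleton_iff] at hw
      subst hw
      exact Relation.TransGen.single (Or.inr ⟨rfl, rfl⟩)
    · have hvO : v ∉ O := hv.resolve_left hvu
      simp only [Option.elim, if_neg hvu] at hw
      obtain ⟨b, hb, rfl⟩ := hw
      have hbv : b ≠ v := fun e => hwne (by rw [e])
      exact Relation.TransGen.single (Or.inl ⟨v, b, rfl, rfl, h.g1 v hvO b hb hbv⟩)
  · -- g2
    intro x hx w hw hwne
    obtain ⟨v, rfl, hv⟩ := hne x hx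
    by_cases hvu : v = u
    · subst hvu
      simp only [Option.elim, if_pos rfl] at hw
      exact absurd ((mem_odd_singleton_none G v w).mp hw) hwne
    · have hvO : v ∉ O := hv.resolve_left hvu
      simp only [Option.elim, if_neg hvu] at hw
      cases w with
      | none =>
        have hug : u ∈ g v := (mem_odd_none G u (g v)).mp hw
        have hpvu : prec v u := h.g1 v hvO u hug (fun e => hvu e.symm)
        refine Relation.TransGen.head (b := some u) ?_
          (Relation.TransGen.single (Or.inr ⟨rfl, rfl⟩))
        exact Or.inl ⟨v, u, rfl, rfl, hpvu⟩
      | some b =>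
        have hb : b ∈ oddNbhd G (g v) := (mem_odd_some G u (g v) b).mp hw
        have hbv : b ≠ v := fun e => hwne (by rw [e])
        exact Relation.TransGen.single (Or.inl ⟨v, b, rfl, rfl, h.g2 v hvO b hb hbv⟩)
  · -- gXY
    intro x hx hlam
    obtain ⟨v, rfl, hv⟩ := hne x hx
    by_cases hvu : v = u
    · subst hvu
      simp only [Option.elim, if_pos rfl]
      constructor
      · simp
      · exact (mem_odd_singleton_none G v (some v)).mpr rfl
    · have hvO : v ∉ O := hv.resolve_left hvu
      simp only [Option.elim, if_neg hvu] at hlam ⊢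
      obtain ⟨h1, h2⟩ := h.gXY v hvO hlam
      constructor
      · rintro ⟨c, hc, hcv⟩
        obtain rfl := Option.some_injective _ hcv.symm
        exact h1 hc
      · exact (mem_odd_some G u (g v) v).mpr h2
  · -- gXZ
    intro x hx hlam
    obtain ⟨v, rfl, hv⟩ := hne x hx
    by_cases hvu : v = u
    · subst hvu
      simp only [Option.elim, if_pos rfl] at hlam
      exact absurd hlam (by simp)
    · have hvO : v ∉ O := hv.resolve_left hvu
      simp only [Option.elim, if_neg hvu] at hlam ⊢
      obtain ⟨h1, h2⟩ := h.gXZ v hvO hlam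
      exact ⟨⟨v, h1, rfl⟩, (mem_odd_some G u (g v) v).mpr h2⟩
  · -- gYZ
    intro x hx hlam
    obtain ⟨v, rfl, hv⟩ := hne x hx
    by_cases hvu : v = u
    · subst hvu
      simp only [Option.elim, if_pos rfl] at hlam
      exact absurd hlam (by simp)
    · have hvO : v ∉ O := hv.resolve_left hvu
      simp only [Option.elim, if_neg hvu] at hlam ⊢
      obtain ⟨h1, h2⟩ := h.gYZ v hvO hlam
      refine ⟨⟨v, h1, rfl⟩, fun hc => h2 ((mem_odd_some G u (g v) v).mp hc)⟩
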